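/- Let λ ∈ ℝ and let μ be a nonzero λ-eigenmeasure of r̃+J̃. Then μ(A) > 0 for every Borel set A ⊆ S with positive Lebesgue measure. -/

import Mathlib

open MeasureTheory Filter Topology

/-- A finite positive Borel measure μ on S is a λ-eigenmeasure of the operator r̃+J̃ if for
every Borel set A ⊆ S one has ∫_A r dμ + ∫_A (∫_S K(y,x) μ(dy)) dx = λ μ(A). -/
def IsEigenmeasure {d : ℕ} (S : Set (EuclideanSpace ℝ (Fin d)))
    (r : EuclideanSpace ℝ (Fin d) → ℝ)
    (K : EuclideanSpace ℝ (Fin d) → EuclideanSpace ℝ (Fin d) → ℝ)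
    (lam : ℝ) (μ : MeasureTheory.Measure (EuclideanSpace ℝ (Fin d))) : Prop :=
  ∀ A : Set (EuclideanSpace ℝ (Fin d)), MeasurableSet A → A ⊆ S →
    (∫ x in A, r x ∂μ) + (∫ x in A, (∫ y in S, K y x ∂μ)) = lam * (μ A).toReal

/-- If μ is a nonzero λ-eigenmeasure of r̃+J̃, then μ(A) > 0 for every Borel set A ⊆ S of
positive Lebesgue measure. -/
theorem stmt4 {d : ℕ}
    (Ω S : Set (EuclideanSpace ℝ (Fin d)))
    (hΩne : Ω.Nonempty) (hΩopen : IsOpen Ω) (hΩbdd : Bornology.IsBounded Ω)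
    (hΩconn : IsConnected Ω) (hSdef : S = closure Ω)
    (hScomp : IsCompact S) (hSvol : 0 < volume S)
    (r : EuclideanSpace ℝ (Fin d) → ℝ) (hr : ContinuousOn r S)
    (hrpos : ∀ x ∈ S, 0 < r x)
    (K : EuclideanSpace ℝ (Fin d) → EuclideanSpace ℝ (Fin d) → ℝ)
    (hK : ContinuousOn (fun q : EuclideanSpace ℝ (Fin d) × EuclideanSpace ℝ (Fin d) =>
      K q.1 q.2) (S ×ˢ S))
    (hKnn : ∀ x ∈ S, ∀ y ∈ S, 0 ≤ K x y)
    (ε₀ c₀ : ℝ) (hε₀ : 0 < ε₀) (hc₀ : 0 < c₀)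
    (hKlb : ∀ x ∈ S, ∀ y ∈ S, dist y x < ε₀ → c₀ < K x y)
    (μ : Measure (EuclideanSpace ℝ (Fin d))) [IsFiniteMeasure μ]
    (hμne : μ ≠ 0) (hμS : μ Sᶜ = 0)
    (lam : ℝ) (hμ : IsEigenmeasure S r K lam μ) :
    ∀ A : Set (EuclideanSpace ℝ (Fin d)), MeasurableSet A → A ⊆ S →
      0 < volume A → 0 < μ A := by
  classical
  have hSclosed : IsClosed S := hScomp.isClosed
  have hSmeas : MeasurableSet S := hSclosed.measurableSet
  have hΩS : Ω ⊆ S := hSdef ▸ subset_closure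
  obtain ⟨M, hM⟩ := (hScomp.prod hScomp).exists_bound_of_continuousOn hK
  -- continuity of slices of K
  have hKslice : ∀ x ∈ S, ContinuousOn (fun y => K y x) S := by
    intro x hx
    exact hK.comp ((continuous_id.prodMk continuous_const).continuousOn)
      (fun y hy => Set.mk_mem_prod hy hx)
  -- integrability of slices
  have hKint : ∀ x ∈ S, IntegrableOn (fun y => K y x) S μ := by
    intro x hx
    refine Integrable.mono' (integrable_const M)
      (((hKslice x hx)).aestronglyMeasurable hSmeas) ?_
    filter_upwards [ae_restrict_mem hSmeas] with y hy
    exact hM (y, x) (Set.mk_mem_prod hy hx)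
  have hμinter : ∀ t : Set (EuclideanSpace ℝ (Fin d)), μ (t ∩ S) = μ t :=
    fun t => measure_inter_conull hμS
  -- positivity of J at points whose ε₀-ball is charged
  have hJpos : ∀ x ∈ S, 0 < μ (Metric.ball x ε₀) → 0 < ∫ y in S, K y x ∂μ := by
    intro x hx hball
    set B := Metric.ball x ε₀ ∩ S with hBdef
    have hBmeas : MeasurableSet B := measurableSet_ball.inter hSmeas
    have hμB : 0 < μ B := by rw [hBdef, hμinter]; exact hball
    have hint := hKint x hx
    have hlow : c₀ * (μ B).toReal ≤ ∫ y in B, K y x ∂μ := by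
      refine setIntegral_ge_of_const_le_real hBmeas (measure_ne_top μ B) ?_
        (hint.mono_set Set.inter_subset_right)
      intro y hy
      refine (hKlb y hy.2 x hx ?_).le
      rw [dist_comm]
      exact Metric.mem_ball.mp hy.1
    have hmono : (∫ y in B, K y x ∂μ) ≤ ∫ y in S, K y x ∂μ := by
      refine setIntegral_mono_set hint ?_
        (HasSubset.Subset.eventuallyLE Set.inter_subset_right)
      filter_upwards [ae_restrict_mem hSmeas] with y hy using hKnn y hy x hx
    have hpos : 0 < c₀ * (μ B).toReal :=
      mul_pos hc₀ (ENNReal.toReal_pos hμB.ne' (measure_ne_top μ B))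
    linarith
  -- continuity of J on S
  have hJcont : ContinuousOn (fun x => ∫ y in S, K y x ∂μ) S := by
    intro x₀ hx₀
    refine continuousWithinAt_of_dominated (F := fun x y => K y x)
      (bound := fun _ => M) ?_ ?_ (integrable_const M) ?_
    · filter_upwards [eventually_mem_nhdsWithin] with x hx
      exact ((hKslice x hx)).aestronglyMeasurable hSmeas
    · filter_upwards [eventually_mem_nhdsWithin] with x hx
      filter_upwards [ae_restrict_mem hSmeas] with y hy
      exact hM (y, x) (Set.mk_mem_prod hy hx)
    · filter_upwards [ae_restrict_mem hSmeas] with y hy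
      have hc : ContinuousOn (fun x => K y x) S :=
        hK.comp ((continuous_const.prodMk continuous_id).continuousOn)
          (fun x hx => Set.mk_mem_prod hy hx)
      exact hc x₀ hx₀
  have hJnonneg : ∀ x ∈ S, 0 ≤ ∫ y in S, K y x ∂μ := fun x hx =>
    setIntegral_nonneg hSmeas (fun y hy => hKnn y hy x hx)
  -- key vanishing lemma
  have hB : ∀ A : Set (EuclideanSpace ℝ (Fin d)), MeasurableSet A → A ⊆ S →
      0 < volume A → μ A = 0 → ∃ w ∈ A, (∫ y in S, K y w ∂μ) = 0 := by
    intro A hA hAS hvol hμA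
    have heig := hμ A hA hAS
    rw [hμA, ENNReal.toReal_zero, mul_zero, Measure.restrict_eq_zero.mpr hμA,
      integral_zero_measure, zero_add] at heig
    have hvolA : volume A ≠ ⊤ :=
      (lt_of_le_of_lt (measure_mono hAS) hScomp.measure_lt_top).ne
    haveI : IsFiniteMeasure (volume.restrict A) :=
      ⟨by rw [Measure.restrict_apply_univ]; exact hvolA.lt_top⟩
    have hint : IntegrableOn (fun x => ∫ y in S, K y x ∂μ) A volume := by
      refine Integrable.mono'
        (integrable_const (M * (μ S).toReal))
        (((hJcont.mono hAS)).aestronglyMeasurable hA) ?_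
      filter_upwards [ae_restrict_mem hA] with x hxA
      have hxS := hAS hxA
      exact norm_setIntegral_le_of_norm_le_const (measure_lt_top μ S)
        (fun y hy => hM (y, x) (Set.mk_mem_prod hy hxS))
    have hzero : (fun x => ∫ y in S, K y x ∂μ) =ᵐ[volume.restrict A] 0 := by
      refine (integral_eq_zero_iff_of_nonneg_ae ?_ hint).mp heig
      filter_upwards [ae_restrict_mem hA] with x hxA using hJnonneg x (hAS hxA)
    have h2 : ∀ᵐ x ∂(volume : Measure (EuclideanSpace ℝ (Fin d))),
        x ∈ A → (∫ y in S, K y x ∂μ) = 0 := (ae_restrict_iff' hA).mp hzero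
    have hN : volume {x | ¬ (x ∈ A → (∫ y in S, K y x ∂μ) = 0)} = 0 := h2
    have hpos : 0 < volume (A \ {x | ¬ (x ∈ A → (∫ y in S, K y x ∂μ) = 0)}) := by
      rw [measure_diff_null hN]; exact hvol
    obtain ⟨w, hwA, hwN⟩ := nonempty_of_measure_ne_zero hpos.ne'
    exact ⟨w, hwA, not_not.mp hwN hwA⟩
  -- the set of points all of whose balls are charged
  set T := {x : EuclideanSpace ℝ (Fin d) | ∀ ε > 0, 0 < μ (Metric.ball x ε)} with hTdef
  have hTclosed : IsClosed T := by
    rw [← isOpen_compl_iff, Metric.isOpen_iff]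
    intro x hx
    have : ¬ ∀ ε > 0, 0 < μ (Metric.ball x ε) := hx
    push_neg at this
    obtain ⟨ε, hε, hnull⟩ := this
    have hnull' : μ (Metric.ball x ε) = 0 := nonpos_iff_eq_zero.mp hnull
    refine ⟨ε / 2, by linarith, fun y hy hyT => ?_⟩
    have h1 : 0 < μ (Metric.ball y (ε / 2)) := hyT (ε / 2) (by linarith)
    have h2 : Metric.ball y (ε / 2) ⊆ Metric.ball x ε := by
      intro w hw
      have := Metric.mem_ball.mp hw
      have := Metric.mem_ball.mp hy
      rw [Metric.mem_ball]
      calc dist w x ≤ dist w y + dist y x := dist_triangle _ _ _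
        _ < ε / 2 + ε / 2 := by linarith
        _ = ε := by ring
    exact absurd (((measure_mono h2).trans hnull'.le)) (not_le.mpr h1)
  -- propagation claim
  have hC : ∀ x ∈ T, ∀ z ∈ Ω, dist z x < ε₀ → z ∈ T := by
    intro x hxT z hzΩ hdist δ hδ
    by_contra hcon
    have hμzero : μ (Metric.ball z δ) = 0 := nonpos_iff_eq_zero.mp (not_lt.mp hcon)
    obtain ⟨δΩ, hδΩ, hsubΩ⟩ := Metric.isOpen_iff.mp hΩopen z hzΩ
    set δ' := min δ (min δΩ ((ε₀ - dist z x) / 2)) with hδ'def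
    have hδ'pos : 0 < δ' := lt_min hδ (lt_min hδΩ (by linarith))
    have hAΩ : Metric.ball z δ' ⊆ Ω :=
      Set.Subset.trans (Metric.ball_subset_ball ((min_le_right _ _).trans (min_le_left _ _))) hsubΩ
    have hAS : Metric.ball z δ' ⊆ S := hAΩ.trans hΩS
    have hμA : μ (Metric.ball z δ') = 0 :=
      le_antisymm ((measure_mono (Metric.ball_subset_ball (min_le_left _ _))).trans
        hμzero.le) zero_le
    obtain ⟨w, hwA, hw0⟩ := hB (Metric.ball z δ') measurableSet_ball hAS
      (Metric.measure_ball_pos volume z hδ'pos) hμA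
    -- w is within ε₀ of x
    have hdwz : dist w z < δ' := Metric.mem_ball.mp hwA
    have hδ'small : δ' ≤ (ε₀ - dist z x) / 2 := (min_le_right _ _).trans (min_le_right _ _)
    have hdwx : dist w x < ε₀ := by
      calc dist w x ≤ dist w z + dist z x := dist_triangle _ _ _
        _ < δ' + dist z x := by linarith
        _ ≤ (ε₀ - dist z x) / 2 + dist z x := by linarith
        _ < ε₀ := by linarith
    have hsubball : Metric.ball x (ε₀ - dist w x) ⊆ Metric.ball w ε₀ := by
      intro y hy
      have h1 := Metric.mem_ball.mp hy
      rw [Metric.mem_ball]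
      have hxw : dist x w = dist w x := dist_comm x w
      calc dist y w ≤ dist y x + dist x w := dist_triangle _ _ _
        _ < (ε₀ - dist w x) + dist w x := by rw [hxw]; linarith
        _ = ε₀ := by ring
    have hballw : 0 < μ (Metric.ball w ε₀) :=
      lt_of_lt_of_le (hxT (ε₀ - dist w x) (by linarith)) (measure_mono hsubball)
    have := hJpos w (hAS hwA) hballw
    rw [hw0] at this
    exact lt_irrefl 0 this
  -- μ S > 0
  have hμSpos : 0 < μ S := by
    have h1 : μ Set.univ ≠ 0 := Measure.measure_univ_ne_zero.mpr hμne
    have h2 : μ Set.univ ≤ μ S := by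
      calc μ Set.univ = μ (S ∪ Sᶜ) := by rw [Set.union_compl_self]
        _ ≤ μ S + μ Sᶜ := measure_union_le _ _
        _ = μ S := by rw [hμS, add_zero]
    exact lt_of_lt_of_le (pos_iff_ne_zero.mpr h1) h2
  -- T ∩ S nonempty
  have hTSne : (T ∩ S).Nonempty := by
    by_contra hcon
    rw [Set.not_nonempty_iff_eq_empty] at hcon
    have hcov : ∀ x ∈ S, ∃ ε > 0, μ (Metric.ball x ε) = 0 := by
      intro x hx
      have hxT : x ∉ T := fun h => (Set.eq_empty_iff_forall_notMem.mp hcon x) ⟨h, hx⟩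
      have : ¬ ∀ ε > 0, 0 < μ (Metric.ball x ε) := hxT
      push_neg at this
      obtain ⟨ε, hε, hle⟩ := this
      exact ⟨ε, hε, nonpos_iff_eq_zero.mp hle⟩
    choose! ε hεpos hεnull using hcov
    obtain ⟨t, ht⟩ := hScomp.elim_finite_subcover
      (fun x : S => Metric.ball (x : EuclideanSpace ℝ (Fin d)) (ε x))
      (fun _ => Metric.isOpen_ball)
      (fun x hx => Set.mem_iUnion.mpr ⟨⟨x, hx⟩, Metric.mem_ball_self (hεpos x hx)⟩)
    have hle : μ S ≤ ∑ i ∈ t, μ (Metric.ball (i : EuclideanSpace ℝ (Fin d)) (ε i)) :=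
      le_trans (measure_mono ht) (measure_biUnion_finset_le _ _)
    have hzero : ∑ i ∈ t, μ (Metric.ball (i : EuclideanSpace ℝ (Fin d)) (ε i)) = 0 :=
      Finset.sum_eq_zero (fun i _ => hεnull i i.2)
    rw [hzero] at hle
    exact absurd (nonpos_iff_eq_zero.mp hle) hμSpos.ne'
  obtain ⟨x₀, hx₀T, hx₀S⟩ := hTSne
  -- get a point of Ω in T
  have hx₀cl : x₀ ∈ closure Ω := hSdef ▸ hx₀S
  obtain ⟨z, hzΩ, hzd⟩ := Metric.mem_closure_iff.mp hx₀cl ε₀ hε₀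
  have hzT : z ∈ T := hC x₀ hx₀T z hzΩ (by rw [dist_comm]; exact hzd)
  -- T ∩ Ω is open
  have hTΩopen : IsOpen (T ∩ Ω) := by
    rw [Metric.isOpen_iff]
    rintro x ⟨hxT, hxΩ⟩
    obtain ⟨δ, hδ, hsub⟩ := Metric.isOpen_iff.mp hΩopen x hxΩ
    refine ⟨min δ ε₀, lt_min hδ hε₀, fun y hy => ?_⟩
    have hyd := Metric.mem_ball.mp hy
    have hyΩ : y ∈ Ω := hsub (Metric.mem_ball.mpr (lt_of_lt_of_le hyd (min_le_left _ _)))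
    exact ⟨hC x hxT y hyΩ (lt_of_lt_of_le hyd (min_le_right _ _)), hyΩ⟩
  -- connectedness: Ω ⊆ T
  have hΩT : Ω ⊆ T ∩ Ω := by
    refine hΩconn.isPreconnected.subset_left_of_subset_union hTΩopen hTclosed.isOpen_compl
      ?_ ?_ ⟨z, hzΩ, hzT, hzΩ⟩
    · exact Set.disjoint_left.mpr (fun a ha hac => hac ha.1)
    · intro a ha
      by_cases haT : a ∈ T
      · exact Or.inl ⟨haT, ha⟩
      · exact Or.inr haT
  have hST : S ⊆ T := by
    rw [hSdef]
    exact closure_minimal (fun x hx => (hΩT hx).1) hTclosed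
  -- conclude
  intro A hA hAS hvol
  by_contra hcon
  have hμA : μ A = 0 := nonpos_iff_eq_zero.mp (not_lt.mp hcon)
  obtain ⟨w, hwA, hw0⟩ := hB A hA hAS hvol hμA
  have hpos := hJpos w (hAS hwA) (hST (hAS hwA) ε₀ hε₀)
  rw [hw0] at hpos
  exact lt_irrefl 0 hpos
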